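/- Let S = {n ∈ ℕ : n ≥ k}. Define X ∼ Y on P(S) iff Y = m + X or X = m + Y for some m ∈ ℕ. Then ∼ is a congruence on P(S) (an equivalence relation compatible with setwise addition), and the quotient monoid P(S)/∼ is isomorphic to the reduced power monoid P₀(ℕ) of finite subsets of ℕ containing 0, via the map sending the class of X to X − α(X). -/

import Mathlib

open Pointwise

/-- The power semigroup `P(S)`: finite nonempty subsets of `S`. -/
def PS (S : Set ℕ) : Set (Finset ℕ) := {X | X.Nonempty ∧ (X : Set ℕ) ⊆ S}

/-- `f` is an automorphism of the power semigroup `P(S)`: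
an additive bijection of `P(S)` (setwise addition). -/
def IsPowerAut (S : Set ℕ) (f : Finset ℕ → Finset ℕ) : Prop :=
  (∀ X ∈ PS S, f X ∈ PS S) ∧
  (∀ X ∈ PS S, ∀ Y ∈ PS S, f X = f Y → X = Y) ∧
  (∀ Y ∈ PS S, ∃ X ∈ PS S, f X = Y) ∧
  (∀ X ∈ PS S, ∀ Y ∈ PS S, f (X + Y) = f X + f Y)

/-- `S` is a numerical semigroup: a subsemigroup of `(ℕ, +)` with finite complement. -/
def IsNumSgp (S : Set ℕ) : Prop :=
  (∀ a ∈ S, ∀ b ∈ S, a + b ∈ S) ∧ (Sᶜ).Finite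

/-- `k` is the critical element of `S`: the least `k` with `[k, ∞) ⊆ S`. -/
def IsCritical (S : Set ℕ) (k : ℕ) : Prop :=
  (∀ n, k ≤ n → n ∈ S) ∧ ∀ j, (∀ n, j ≤ n → n ∈ S) → k ≤ j

/-- The translation relation: `X ∼ Y` iff `Y = m + X` or `X = m + Y` for some `m ∈ ℕ`. -/
def TrRel (X Y : Finset ℕ) : Prop := ∃ m : ℕ, Y = {m} + X ∨ X = {m} + Y

/-- The normalization map `X ↦ X - α(X)`. -/
def phi (X : Finset ℕ) : Finset ℕ :=
  if h : X.Nonempty then X.image (fun x => x - X.min' h) else ∅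

/-- `∼` is a congruence on `P([k, ∞))` and the quotient monoid `P(S)/∼` is
isomorphic to the reduced power monoid `P₀(ℕ)` via the class of `X ↦ X - α(X)`:
`φ` identifies exactly the `∼`-classes, is surjective onto finite sets containing `0`,
and is additive. -/
lemma sadd (m : ℕ) (X : Finset ℕ) : {m} + X = X.image (fun x => m + x) := by
  ext y
  simp [Finset.mem_add, Finset.mem_image, eq_comm]

lemma phi_eq (X : Finset ℕ) (h : X.Nonempty) :
    phi X = X.image (fun x => x - X.min' h) := by simp [phi, h]

lemma zero_mem_phi (X : Finset ℕ) (h : X.Nonempty) : 0 ∈ phi X := by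
  rw [phi_eq X h]
  exact Finset.mem_image.2 ⟨X.min' h, X.min'_mem h, by omega⟩

lemma reconstr (X : Finset ℕ) (h : X.Nonempty) : {X.min' h} + phi X = X := by
  rw [phi_eq X h, sadd, Finset.image_image]
  have : ∀ x ∈ X, X.min' h + (x - X.min' h) = x := fun x hx => by
    have := X.min'_le x hx; omega
  calc X.image ((fun y => X.min' h + y) ∘ (fun x => x - X.min' h))
      = X.image id := Finset.image_congr (fun x hx => this x hx)
    _ = X := Finset.image_id

lemma min'_singleton_add (m : ℕ) (X : Finset ℕ) (h : X.Nonempty)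
    (h2 : ({m} + X).Nonempty) : @Eq ℕ (({m} + X).min' h2) (m + X.min' h) := by
  apply le_antisymm
  · apply Finset.min'_le
    rw [Finset.mem_add]
    exact ⟨m, by simp, X.min' h, X.min'_mem h, rfl⟩
  · apply Finset.le_min'
    intro y hy
    rw [Finset.mem_add] at hy
    obtain ⟨a, ha, b, hb, rfl⟩ := hy
    simp only [Finset.mem_singleton] at ha
    subst ha
    exact Nat.add_le_add_left (X.min'_le b hb) _

lemma phi_singleton_add (m : ℕ) (X : Finset ℕ) (h : X.Nonempty) :
    phi ({m} + X) = phi X := by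
  have h2 : ({m} + X).Nonempty := by
    rw [sadd]; exact h.image _
  rw [phi_eq _ h2, phi_eq X h, min'_singleton_add m X h h2, sadd, Finset.image_image]
  apply Finset.image_congr
  intro x hx
  simp only [Function.comp]
  omega

lemma phi_of_zero_mem (X : Finset ℕ) (h0 : 0 ∈ X) : phi X = X := by
  have h : X.Nonempty := ⟨0, h0⟩
  have hmin : X.min' h = 0 := Nat.le_zero.1 (X.min'_le 0 h0)
  rw [phi_eq X h, hmin]
  simp

lemma trrel_iff (X Y : Finset ℕ) (hX : X.Nonempty) (hY : Y.Nonempty) :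
    (∃ m : ℕ, Y = {m} + X ∨ X = {m} + Y) ↔ phi X = phi Y := by
  constructor
  · rintro ⟨m, rfl | rfl⟩
    · rw [phi_singleton_add m X hX]
    · rw [phi_singleton_add m Y hY]
  · intro hphi
    rcases le_total (X.min' hX) (Y.min' hY) with hab | hab
    · refine ⟨Y.min' hY - X.min' hX, Or.inl ?_⟩
      calc Y = {Y.min' hY} + phi Y := (reconstr Y hY).symm
        _ = {Y.min' hY - X.min' hX} + ({X.min' hX} + phi X) := by
            rw [← hphi, ← add_assoc, Finset.singleton_add_singleton,
              Nat.sub_add_cancel hab]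
        _ = {Y.min' hY - X.min' hX} + X := by rw [reconstr]
    · refine ⟨X.min' hX - Y.min' hY, Or.inr ?_⟩
      calc X = {X.min' hX} + phi X := (reconstr X hX).symm
        _ = {X.min' hX - Y.min' hY} + ({Y.min' hY} + phi Y) := by
            rw [hphi, ← add_assoc, Finset.singleton_add_singleton,
              Nat.sub_add_cancel hab]
        _ = {X.min' hX - Y.min' hY} + Y := by rw [reconstr]

lemma phi_add (X Y : Finset ℕ) (hX : X.Nonempty) (hY : Y.Nonempty) :
    phi (X + Y) = phi X + phi Y := by
  have h0 : 0 ∈ phi X + phi Y := by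
    rw [Finset.mem_add]
    exact ⟨0, zero_mem_phi X hX, 0, zero_mem_phi Y hY, rfl⟩
  have key : X + Y = {X.min' hX + Y.min' hY} + (phi X + phi Y) := by
    conv_lhs => rw [← reconstr X hX, ← reconstr Y hY]
    rw [← Finset.singleton_add_singleton]
    abel
  rw [key, phi_singleton_add _ _ ⟨0, h0⟩, phi_of_zero_mem _ h0]

theorem stmt10 (k : ℕ) (S : Set ℕ) (hS : S = {n : ℕ | k ≤ n}) :
    (∀ X ∈ PS S, TrRel X X) ∧
    (∀ X ∈ PS S, ∀ Y ∈ PS S, TrRel X Y → TrRel Y X) ∧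
    (∀ X ∈ PS S, ∀ Y ∈ PS S, ∀ Z ∈ PS S, TrRel X Y → TrRel Y Z → TrRel X Z) ∧
    (∀ X ∈ PS S, ∀ X' ∈ PS S, ∀ Y ∈ PS S, ∀ Y' ∈ PS S,
        TrRel X X' → TrRel Y Y' → TrRel (X + Y) (X' + Y')) ∧
    (∀ X ∈ PS S, 0 ∈ phi X) ∧
    (∀ X ∈ PS S, ∀ Y ∈ PS S, (TrRel X Y ↔ phi X = phi Y)) ∧
    (∀ Z : Finset ℕ, 0 ∈ Z → ∃ X ∈ PS S, phi X = Z) ∧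
    (∀ X ∈ PS S, ∀ Y ∈ PS S, phi (X + Y) = phi X + phi Y) := by
  have trrel_iff' : ∀ X Y : Finset ℕ, X.Nonempty → Y.Nonempty →
      (TrRel X Y ↔ phi X = phi Y) := fun X Y hX hY => trrel_iff X Y hX hY
  refine ⟨?_, ?_, ?_, ?_, ?_, ?_, ?_, ?_⟩
  · intro X hX
    exact ⟨0, Or.inl (by rw [sadd]; simp)⟩
  · intro X hX Y hY h
    rw [trrel_iff' X Y hX.1 hY.1] at h
    rw [trrel_iff' Y X hY.1 hX.1]
    exact h.symm
  · intro X hX Y hY Z hZ h1 h2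
    rw [trrel_iff' X Y hX.1 hY.1] at h1
    rw [trrel_iff' Y Z hY.1 hZ.1] at h2
    rw [trrel_iff' X Z hX.1 hZ.1]
    exact h1.trans h2
  · intro X hX X' hX' Y hY Y' hY' h1 h2
    rw [trrel_iff' X X' hX.1 hX'.1] at h1
    rw [trrel_iff' Y Y' hY.1 hY'.1] at h2
    rw [trrel_iff' (X + Y) (X' + Y') (hX.1.add hY.1) (hX'.1.add hY'.1)]
    rw [phi_add X Y hX.1 hY.1, phi_add X' Y' hX'.1 hY'.1, h1, h2]
  · intro X hX
    exact zero_mem_phi X hX.1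
  · intro X hX Y hY
    exact trrel_iff' X Y hX.1 hY.1
  · intro Z h0
    refine ⟨{k} + Z, ⟨?_, ?_⟩, ?_⟩
    · rw [sadd]; exact Finset.Nonempty.image ⟨0, h0⟩ _
    · intro x hx
      rw [sadd, Finset.coe_image] at hx
      obtain ⟨z, _, rfl⟩ := hx
      rw [hS]
      exact Nat.le_add_right k z
    · rw [phi_singleton_add k Z ⟨0, h0⟩, phi_of_zero_mem Z h0]
  · intro X hX Y hY
    exact phi_add X Y hX.1 hY.1
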